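/- Let n ≥ 2 and let M be a nonempty subset of Fin n with t = |M| and t < n. In EuclideanSpace ℂ (Fin n), define the oracle O acting by (O x)_i = −x_i if i ∈ M and (O x)_i = x_i otherwise, the uniform superposition Ψ = (1/√n) Σ_{i} e_i, the reflection R x = 2⟪Ψ, x⟫ Ψ − x, and the Grover operator G = R ∘ O. Let θ = arcsin √(t/n) and set k = ⌊π/(4θ)⌋. Then the probability of measuring a marked element after k Grover iterations satisfies Σ_{i∈M} ‖(G^k Ψ)_i‖² ≥ 1 − t/n. In particular, O(√(n/t)) iterations suffice to find a marked element with high probability. -/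

import Mathlib

lemma grover_sin_step (α θ : ℝ) :
    Real.sin (α + 2*θ) = Real.sin α + 2 * Real.sin θ * Real.cos (α + θ) := by
  rw [Real.sin_add, Real.cos_add, Real.sin_two_mul, Real.cos_two_mul]
  linear_combination (2 * Real.sin α) * Real.sin_sq_add_cos_sq θ

lemma grover_cos_step (α θ : ℝ) :
    Real.cos (α + 2*θ) = 2 * Real.cos θ * Real.cos (α + θ) - Real.cos α := by
  rw [Real.cos_add, Real.cos_add, Real.sin_two_mul, Real.cos_two_mul]
  ring

/-- After `k = ⌊π/(4θ)⌋` Grover iterations, the probability of measuring a marked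
element is at least `1 - t/n`, where `θ = arcsin √(t/n)`. -/
theorem grover_floor_iterations (n : ℕ) (hn : 2 ≤ n) (M : Finset (Fin n))
    (hM : M.Nonempty) (t : ℕ) (ht : t = M.card) (htn : t < n)
    (Ψ : EuclideanSpace ℂ (Fin n))
    (hΨ : ∀ i, Ψ i = ((Real.sqrt n)⁻¹ : ℂ))
    (O R G : EuclideanSpace ℂ (Fin n) → EuclideanSpace ℂ (Fin n))
    (hO : ∀ x, ∀ i, O x i = if i ∈ M then -x i else x i)
    (hR : ∀ x, R x = (2 * (inner ℂ Ψ x : ℂ)) • Ψ - x)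
    (hG : ∀ x, G x = R (O x))
    (θ : ℝ) (hθ : θ = Real.arcsin (Real.sqrt ((t : ℝ) / n)))
    (k : ℕ) (hk : k = ⌊Real.pi / (4 * θ)⌋₊) :
    ∑ i ∈ M, ‖(G^[k] Ψ) i‖ ^ 2 ≥ 1 - (t : ℝ) / n := by
  have ht0 : 0 < t := ht ▸ Finset.card_pos.mpr hM
  have htR : (0:ℝ) < t := by exact_mod_cast ht0
  have htnR : (t:ℝ) < n := by exact_mod_cast htn
  have hnR : (0:ℝ) < n := lt_trans htR htnR
  have hmR : (0:ℝ) < (n:ℝ) - t := by linarith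
  set st := Real.sqrt t with hst
  set sn := Real.sqrt n with hsn
  set sm := Real.sqrt ((n:ℝ) - t) with hsm
  have hstpos : 0 < st := Real.sqrt_pos.mpr htR
  have hsnpos : 0 < sn := Real.sqrt_pos.mpr hnR
  have hsmpos : 0 < sm := Real.sqrt_pos.mpr hmR
  have hst2 : st^2 = t := Real.sq_sqrt htR.le
  have hsn2 : sn^2 = n := Real.sq_sqrt hnR.le
  have hsm2 : sm^2 = (n:ℝ) - t := Real.sq_sqrt hmR.le
  have hfrac0 : (0:ℝ) ≤ (t:ℝ)/n := by positivity
  have hfrac1 : (t:ℝ)/n ≤ 1 := by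
    rw [div_le_one hnR]; linarith
  have hsin : Real.sin θ = st / sn := by
    rw [hθ, Real.sin_arcsin (by linarith [Real.sqrt_nonneg ((t:ℝ)/n)])
      (Real.sqrt_le_one.mpr hfrac1), Real.sqrt_div htR.le]
  have hcos : Real.cos θ = sm / sn := by
    rw [hθ, Real.cos_arcsin, Real.sq_sqrt hfrac0,
      show (1 - (t:ℝ)/n) = ((n:ℝ) - t)/n by field_simp,
      Real.sqrt_div hmR.le]
  -- closed form for the state after j iterations
  have key : ∀ j : ℕ, ∀ i : Fin n, (G^[j] Ψ) i =
      if i ∈ M then ((Real.sin ((2*(j:ℝ)+1)*θ) / st : ℝ) : ℂ)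
      else ((Real.cos ((2*(j:ℝ)+1)*θ) / sm : ℝ) : ℂ) := by
    intro j
    induction j with
    | zero =>
      intro i
      have h1 : Real.sin ((2*((0:ℕ):ℝ)+1)*θ) / st = sn⁻¹ := by
        push_cast
        rw [show (2*(0:ℝ)+1)*θ = θ by ring, hsin]
        field_simp
      have h2 : Real.cos ((2*((0:ℕ):ℝ)+1)*θ) / sm = sn⁻¹ := by
        push_cast
        rw [show (2*(0:ℝ)+1)*θ = θ by ring, hcos]
        field_simp
      simp only [Function.iterate_zero, id_eq, hΨ, h1, h2]
      split <;> push_cast <;> ring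
    | succ j ih =>
      intro i
      set α := (2*(j:ℝ)+1)*θ with hα
      set s := G^[j] Ψ with hs
      set A := Real.sin α with hA
      set B := Real.cos α with hB
      have hOs : ∀ i : Fin n, O s i =
          if i ∈ M then ((-(A/st) : ℝ) : ℂ) else ((B/sm : ℝ) : ℂ) := by
        intro i
        rw [hO]
        by_cases hi : i ∈ M <;> simp [hi, ih i]
      have hcard : (Mᶜ : Finset (Fin n)).card = n - t := by
        rw [Finset.card_compl, ht, Fintype.card_fin]
      have hinner : (inner ℂ Ψ (O s) : ℂ) = ((Real.cos (α + θ) : ℝ) : ℂ) := by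
        rw [PiLp.inner_apply]
        simp only [RCLike.inner_apply, hOs, hΨ]
        rw [← Finset.sum_add_sum_compl M]
        have e1 : ∑ i ∈ M, (starRingEnd ℂ) (((Real.sqrt n : ℝ) : ℂ)⁻¹) *
            (if i ∈ M then ((-(A/st) : ℝ) : ℂ) else ((B/sm : ℝ) : ℂ)) =
            (t : ℂ) * (((sn⁻¹ : ℝ) : ℂ) * ((-(A/st) : ℝ) : ℂ)) := by
          rw [Finset.sum_congr rfl (fun i hi => by rw [if_pos hi]),
            Finset.sum_const, ht]
          simp [← hsn, map_inv₀, Complex.conj_ofReal, mul_comm]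
        have e2 : ∑ i ∈ Mᶜ, (starRingEnd ℂ) (((Real.sqrt n : ℝ) : ℂ)⁻¹) *
            (if i ∈ M then ((-(A/st) : ℝ) : ℂ) else ((B/sm : ℝ) : ℂ)) =
            (((n:ℝ) - t : ℝ) : ℂ) * (((sn⁻¹ : ℝ) : ℂ) * ((B/sm : ℝ) : ℂ)) := by
          rw [Finset.sum_congr rfl
            (fun i hi => by rw [if_neg (Finset.mem_compl.mp hi)]),
            Finset.sum_const, hcard]
          have : (((n - t : ℕ) : ℝ) : ℂ) = (((n:ℝ) - t : ℝ) : ℂ) := by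
            push_cast [Nat.cast_sub htn.le]; ring
          simp [← hsn, map_inv₀, Complex.conj_ofReal, ← this]
        simp only [mul_comm _ ((starRingEnd ℂ) _)]
        rw [← hsn] at e1 e2
        rw [e1, e2]
        have hreal : (t:ℝ) * (sn⁻¹ * (-(A/st))) + ((n:ℝ) - t) * (sn⁻¹ * (B/sm)) =
            Real.cos (α + θ) := by
          rw [Real.cos_add, hsin, hcos, ← hA, ← hB, ← hsm2, ← hst2]
          field_simp
          ring
        calc (t : ℂ) * (((sn⁻¹ : ℝ) : ℂ) * ((-(A/st) : ℝ) : ℂ)) +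
              (((n:ℝ) - t : ℝ) : ℂ) * (((sn⁻¹ : ℝ) : ℂ) * ((B/sm : ℝ) : ℂ))
            = (((t:ℝ) * (sn⁻¹ * (-(A/st))) + ((n:ℝ) - t) * (sn⁻¹ * (B/sm)) : ℝ) : ℂ) := by
              push_cast; ring
          _ = ((Real.cos (α + θ) : ℝ) : ℂ) := by rw [hreal]
      have hnext : (2*((j:ℝ)+1)+1)*θ = α + 2*θ := by rw [hα]; ring
      rw [Function.iterate_succ_apply', ← hs, hG, hR, hinner]
      have hcoord : ((2 * ((Real.cos (α + θ) : ℝ) : ℂ)) • Ψ - O s) i =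
          (2 * ((Real.cos (α + θ) : ℝ) : ℂ)) * Ψ i - O s i := by
        simp [PiLp.sub_apply, PiLp.smul_apply, smul_eq_mul]
      rw [hcoord, hΨ, hOs,
        show (((j:ℕ)+1 : ℕ):ℝ) = (j:ℝ)+1 by push_cast; ring, hnext]
      by_cases hi : i ∈ M
      · simp only [if_pos hi]
        have : Real.sin (α + 2*θ) / st =
            2 * Real.cos (α + θ) * sn⁻¹ + A/st := by
          rw [grover_sin_step α θ, hsin, ← hA]
          field_simp
          ring
        rw [this]; push_cast; ring
      · simp only [if_neg hi]
        have : Real.cos (α + 2*θ) / sm =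
            2 * Real.cos (α + θ) * sn⁻¹ - B/sm := by
          rw [grover_cos_step α θ, hcos, ← hB]
          field_simp
        rw [this]; push_cast; ring
  -- the probability of success is sin²((2k+1)θ)
  set S := Real.sin ((2*(k:ℝ)+1)*θ) with hS
  have hsum : ∑ i ∈ M, ‖(G^[k] Ψ) i‖ ^ 2 = S^2 := by
    have h1 : ∀ i ∈ M, ‖(G^[k] Ψ) i‖ ^ 2 = S^2 / (t:ℝ) := by
      intro i hi
      rw [key k i, if_pos hi, Complex.norm_real, Real.norm_eq_abs, sq_abs,
        div_pow, hst2, ← hS]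
    rw [Finset.sum_congr rfl h1, Finset.sum_const, ← ht, nsmul_eq_mul,
      mul_div_cancel₀ _ (ne_of_gt htR)]
  rw [hsum]
  -- angle bounds
  have hθpos : 0 < θ := by
    rw [hθ]; exact Real.arcsin_pos.mpr (Real.sqrt_pos.mpr (by positivity))
  have hθle : θ ≤ Real.pi / 2 := hθ ▸ Real.arcsin_le_pi_div_two _
  have hk1 : (k:ℝ) ≤ Real.pi / (4*θ) := by
    rw [hk]; exact Nat.floor_le (by positivity)
  have hk2 : Real.pi / (4*θ) < (k:ℝ) + 1 := by
    rw [hk]; exact Nat.lt_floor_add_one _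
  have h4θ : (0:ℝ) < 4*θ := by linarith
  have hub : (2*(k:ℝ)+1)*θ ≤ Real.pi/2 + θ := by
    have h := (le_div_iff₀ h4θ).mp hk1
    ring_nf at h ⊢
    linarith
  have hlb : Real.pi/2 - θ ≤ (2*(k:ℝ)+1)*θ := by
    have h := (div_lt_iff₀ h4θ).mp hk2
    ring_nf at h ⊢
    linarith
  have hβ : |(2*(k:ℝ)+1)*θ - Real.pi/2| ≤ θ := abs_le.mpr ⟨by linarith, by linarith⟩
  have hSeq : S = Real.cos ((2*(k:ℝ)+1)*θ - Real.pi/2) :=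
    (Real.cos_sub_pi_div_two _).symm
  have hScos : Real.cos θ ≤ S := by
    rw [hSeq, ← Real.cos_abs ((2*(k:ℝ)+1)*θ - Real.pi/2)]
    exact Real.cos_le_cos_of_nonneg_of_le_pi (abs_nonneg _)
      (by linarith [Real.pi_pos]) hβ
  have hcosnn : 0 ≤ Real.cos θ :=
    Real.cos_nonneg_of_mem_Icc ⟨by linarith, hθle⟩
  have hcossq : Real.cos θ ^ 2 = 1 - (t:ℝ)/n := by
    rw [hcos, div_pow, hsm2, hsn2]
    field_simp
  have hsq : Real.cos θ ^ 2 ≤ S^2 := pow_le_pow_left₀ hcosnn hScos 2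
  linarith [hcossq, hsq]
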